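/- Let p be a prime and let λ be a multiset of positive integers that is not p-carry-minimal. Then there exists a multiset λ' ∈ ann_p(λ) with α_p(λ') < α_p(λ). -/

import Mathlib

open MvPolynomial

/-- The `m`-coboundary map `δ_m` on polynomials in `k` variables `x_1, …, x_k`
(indexed by `Fin k`, with `j : Fin k` standing for the variable `x_{j+1}`),
landing in polynomials in the variables `x_0, …, x_k` (indexed by `Fin (k+1)`). -/
noncomputable def delta (A : Type*) [CommRing A] (m k : ℕ)
    (f : MvPolynomial (Fin k) A) : MvPolynomial (Fin (k + 1)) A :=
  aeval (fun j : Fin k => (X j.succ : MvPolynomial (Fin (k + 1)) A)) f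
    + ∑ i ∈ Finset.Icc 1 m, (-1 : MvPolynomial (Fin (k + 1)) A) ^ i *
        aeval (fun j : Fin k =>
          if (j : ℕ) + 1 < i then (X j.castSucc : MvPolynomial (Fin (k + 1)) A)
          else if (j : ℕ) + 1 = i then X j.castSucc + X j.succ
          else X j.succ) f
    + (-1 : MvPolynomial (Fin (k + 1)) A) ^ (m + 1) *
        aeval (fun j : Fin k =>
          if (j : ℕ) + 1 ≤ m then (X j.castSucc : MvPolynomial (Fin (k + 1)) A)
          else X j.succ) f

/-- The monomial symmetric polynomial `τ λ` associated to a multi-index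
`λ : Fin k → ℕ`: the sum of `x^μ` over the distinct rearrangements `μ` of `λ`. -/
noncomputable def tau (A : Type*) [CommRing A] {k : ℕ} (lam : Fin k → ℕ) :
    MvPolynomial (Fin k) A :=
  ∑ d ∈ (Finset.univ : Finset (Equiv.Perm (Fin k))).image
      (fun σ => Finsupp.equivFunOnFinite.symm (fun i => lam (σ i))),
    monomial d (1 : A)

/-- The multiset of values of a multi-index `Fin k → ℕ`. -/
def multisetOf {k : ℕ} (lam : Fin k → ℕ) : Multiset ℕ :=
  Multiset.map lam Finset.univ.val

/-- The exponent multiset of an exponent vector `d : Fin k →₀ ℕ`. -/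
def exMult {k : ℕ} (d : Fin k →₀ ℕ) : Multiset ℕ :=
  multisetOf (⇑d)

/-- `σ_p(n)`, the sum of the digits of `n` in base `p`. -/
def sigmaDigits (p n : ℕ) : ℕ := (Nat.digits p n).sum

/-- `α_p(λ)`, the number of carries when summing the entries of `λ` in base `p`;
equivalently the `p`-adic valuation of the multinomial coefficient of `λ`. -/
def alphaCarry (p : ℕ) (s : Multiset ℕ) : ℕ :=
  padicValNat p (Nat.factorial s.sum / (s.map Nat.factorial).prod)

/-- The splitting distance `φ_p(λ) = (Σ_i σ_p(λ_i)) − |λ|`. -/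
def phiSplit (p : ℕ) (s : Multiset ℕ) : ℕ :=
  (s.map (sigmaDigits p)).sum - Multiset.card s

/-- A multiset is power-of-`p` when all its entries are powers of `p`. -/
def IsPowOf (p : ℕ) (s : Multiset ℕ) : Prop := ∀ x ∈ s, ∃ a : ℕ, x = p ^ a

/-- `λ` is `p`-carry-minimal: `α_p(λ) ≤ α_p(μ)` for every multiset `μ` of positive
integers with the same sum and the same number of entries as `λ`. -/
def IsCarryMin (p : ℕ) (s : Multiset ℕ) : Prop :=
  ∀ t : Multiset ℕ, (∀ x ∈ t, 0 < x) → t.sum = s.sum →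
    Multiset.card t = Multiset.card s → alphaCarry p s ≤ alphaCarry p t

/-- A single gathering operation: replace two entries `a`, `b` by `a + b`. -/
def Gathers (s t : Multiset ℕ) : Prop :=
  ∃ a b u, s = a ::ₘ b ::ₘ u ∧ t = (a + b) ::ₘ u

/-- `gatherSet m λ = T^m(λ)`, the set of multisets obtained from `λ` by `m`
successive gathering operations. -/
def gatherSet : ℕ → Multiset ℕ → Set (Multiset ℕ)
  | 0, s => {s}
  | m + 1, s => {t | ∃ u ∈ gatherSet m s, Gathers u t}

/-- One step of the annihilating-set construction: split an entry `x = a + b`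
(with `a, b > 0` and no base-`p` carries in `a + b`), and add `b` onto another
entry `y`. -/
def AnnStep (p : ℕ) (μ ν : Multiset ℕ) : Prop :=
  ∃ (x y a b : ℕ) (u : Multiset ℕ), μ = x ::ₘ y ::ₘ u ∧ 0 < a ∧ 0 < b ∧ a + b = x ∧
    sigmaDigits p a + sigmaDigits p b = sigmaDigits p x ∧ ν = a ::ₘ (b + y) ::ₘ u

/-- `ann_p(λ)`: the smallest set of multisets containing `λ` closed under `AnnStep`. -/
def annSet (p : ℕ) (lam : Multiset ℕ) : Set (Multiset ℕ) :=
  {μ | Relation.ReflTransGen (AnnStep p) lam μ}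

/-- The `m`-coboundary map as a linear map. -/
noncomputable def deltaLM (A : Type*) [CommRing A] (m k : ℕ) :
    MvPolynomial (Fin k) A →ₗ[A] MvPolynomial (Fin (k + 1)) A :=
  (aeval (fun j : Fin k => (X j.succ : MvPolynomial (Fin (k + 1)) A))).toLinearMap
    + ∑ i ∈ Finset.Icc 1 m, ((-1 : A) ^ i) •
        (aeval (fun j : Fin k =>
          if (j : ℕ) + 1 < i then (X j.castSucc : MvPolynomial (Fin (k + 1)) A)
          else if (j : ℕ) + 1 = i then X j.castSucc + X j.succ
          else X j.succ)).toLinearMap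
    + ((-1 : A) ^ (m + 1)) •
        (aeval (fun j : Fin k =>
          if (j : ℕ) + 1 ≤ m then (X j.castSucc : MvPolynomial (Fin (k + 1)) A)
          else X j.succ)).toLinearMap

section Aux

def dg (p a x : ℕ) : ℕ := x / p ^ a % p

variable {p : ℕ}

lemma sd_zero : sigmaDigits p 0 = 0 := by simp [sigmaDigits]

lemma sd_step (hp : 2 ≤ p) (x : ℕ) :
    sigmaDigits p x = x % p + sigmaDigits p (x / p) := by
  rcases Nat.eq_zero_or_pos x with h | h
  · simp [h, sd_zero]
  · rw [sigmaDigits, Nat.digits_def' hp h]; simp [sigmaDigits]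

lemma sd_lt (hp : 2 ≤ p) {x : ℕ} (h : x < p) : sigmaDigits p x = x := by
  rw [sd_step hp, Nat.mod_eq_of_lt h, Nat.div_eq_of_lt h, sd_zero]; omega

lemma sd_le (x : ℕ) : sigmaDigits p x ≤ x := Nat.digit_sum_le p x

lemma sd_pos (hp : 2 ≤ p) {x : ℕ} (h : 0 < x) : 0 < sigmaDigits p x := by
  induction x using Nat.strong_induction_on with
  | _ x ih =>
    rw [sd_step hp]
    rcases Nat.eq_zero_or_pos (x % p) with h0 | h0
    · have hd : 0 < x / p :=
        Nat.div_pos (Nat.le_of_dvd h (Nat.dvd_of_mod_eq_zero h0)) (by omega)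
      have := ih (x / p) (Nat.div_lt_self h (by omega)) hd
      omega
    · omega

lemma succ_mod_div (hp : 2 ≤ p) (m : ℕ) :
    (m % p < p - 1 → (m+1) % p = m % p + 1 ∧ (m+1) / p = m / p) ∧
    (m % p = p - 1 → (m+1) % p = 0 ∧ (m+1) / p = m / p + 1) := by
  have key := Nat.mod_add_div m p
  constructor
  · intro h
    have e : m + 1 = (m % p + 1) + p * (m / p) := by omega
    have e1 : (m+1) % p = m % p + 1 := by
      rw [e, Nat.add_mul_mod_self_left, Nat.mod_eq_of_lt (by omega)]
    have e2 : (m+1) / p = m / p := by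
      rw [e, Nat.add_mul_div_left _ _ (by omega : 0 < p), Nat.div_eq_of_lt (by omega)]; omega
    exact ⟨e1, e2⟩
  · intro h
    have e : m + 1 = 0 + p * (m / p + 1) := by
      rw [Nat.mul_add, Nat.mul_one]; omega
    have e1 : (m+1) % p = 0 := by rw [e, Nat.add_mul_mod_self_left, Nat.zero_mod]
    have e2 : (m+1) / p = m / p + 1 := by
      rw [e, Nat.add_mul_div_left _ _ (by omega : 0 < p), Nat.div_eq_of_lt (by omega)]; omega
    exact ⟨e1, e2⟩

lemma sd_succ_le (hp : 2 ≤ p) (m : ℕ) :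
    sigmaDigits p (m + 1) ≤ sigmaDigits p m + 1 := by
  induction m using Nat.strong_induction_on with
  | _ m ih =>
    have hmp : m % p < p := Nat.mod_lt _ (by omega)
    rcases Nat.lt_or_ge (m % p) (p - 1) with h | h
    · obtain ⟨h1, h2⟩ := (succ_mod_div hp m).1 h
      rw [sd_step hp (m+1), sd_step hp m, h1, h2]; omega
    · have h' : m % p = p - 1 := by omega
      obtain ⟨h1, h2⟩ := (succ_mod_div hp m).2 h'
      have key := Nat.mod_add_div m p
      have hm : 0 < m := by omega
      have hdiv : m / p < m := Nat.div_lt_self hm (by omega)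
      have := ih (m / p) hdiv
      rw [sd_step hp (m+1), sd_step hp m, h1, h2]
      omega

lemma sd_split (hp : 2 ≤ p) (q x : ℕ) :
    sigmaDigits p x = sigmaDigits p (x % p ^ q) + sigmaDigits p (x / p ^ q) := by
  induction q generalizing x with
  | zero => simp [Nat.mod_one, sd_zero]
  | succ q ih =>
    have e1 : x % p ^ (q+1) % p ^ q = x % p ^ q :=
      Nat.mod_mod_of_dvd _ (pow_dvd_pow p (by omega))
    have e2 : x % p ^ (q+1) / p ^ q = x / p ^ q % p := by
      rw [pow_succ]; exact Nat.mod_mul_right_div_self x (p^q) p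
    have e3 : x / p ^ q / p = x / p ^ (q+1) := by
      rw [Nat.div_div_eq_div_mul, pow_succ]
    calc sigmaDigits p x = sigmaDigits p (x % p ^ q) + sigmaDigits p (x / p ^ q) := ih x
    _ = sigmaDigits p (x % p ^ q) + (x / p ^ q % p + sigmaDigits p (x / p ^ (q+1))) := by
        rw [sd_step hp (x / p ^ q), e3]
    _ = sigmaDigits p (x % p ^ (q+1)) + sigmaDigits p (x / p ^ (q+1)) := by
        rw [ih (x % p ^ (q+1)), e1, e2, sd_lt hp (Nat.mod_lt _ (by omega))]
        omega

lemma dg_zero (a : ℕ) : dg p a 0 = 0 := by simp [dg]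

lemma dg_lt (hp : 2 ≤ p) (a x : ℕ) : dg p a x < p := Nat.mod_lt _ (by omega)

lemma dg_zero_idx (x : ℕ) : dg p 0 x = x % p := by simp [dg]

lemma dg_div (j x : ℕ) : dg p j (x / p) = dg p (j+1) x := by
  simp only [dg, Nat.div_div_eq_div_mul, ← pow_succ']

lemma pow_split {i j : ℕ} (h : j ≤ i) : (p:ℕ) ^ i = p ^ (i - j) * p ^ j := by
  rw [← pow_add]; congr 1; omega

lemma pow_peel {i : ℕ} (h : 1 ≤ i) : (p:ℕ) ^ i = p * p ^ (i - 1) := by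
  conv_lhs => rw [show i = (i-1)+1 by omega]
  rw [pow_succ']

lemma dg_pow_mul (hp : 2 ≤ p) {m : ℕ} (hm : m < p) (a j : ℕ) :
    dg p j (m * p ^ a) = if j = a then m else 0 := by
  have hpj : 0 < p ^ j := (pow_pos (by omega : 0 < p) j)
  rcases lt_trichotomy j a with h | h | h
  · have e : m * p ^ a = (p * (m * p ^ (a - j - 1))) * p ^ j := by
      rw [pow_split (show j ≤ a by omega), pow_peel (show 1 ≤ a - j by omega)]
      ring
    have e2 : (p * (m * p ^ (a - j - 1))) * p ^ j / p ^ j = p * (m * p ^ (a - j - 1)) :=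
      Nat.mul_div_cancel _ hpj
    rw [dg, e, e2, Nat.mul_mod_right, if_neg (by omega)]
  · subst h
    have e2 : m * p ^ j / p ^ j = m := Nat.mul_div_cancel _ hpj
    rw [dg, e2, Nat.mod_eq_of_lt hm, if_pos rfl]
  · have e : p ^ j = p ^ a * p ^ (j - a) := by rw [← pow_add]; congr 1; omega
    have e1 : m * p ^ a / p ^ j = m / p ^ (j - a) := by
      rw [e, ← Nat.div_div_eq_div_mul, Nat.mul_div_cancel _ ((pow_pos (by omega : 0 < p) a))]
    have hz : m / p ^ (j - a) = 0 := by
      apply Nat.div_eq_of_lt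
      calc m < p := hm
      _ = p ^ 1 := (pow_one p).symm
      _ ≤ p ^ (j - a) := Nat.pow_le_pow_right (by omega) (by omega)
    rw [dg, e1, hz, Nat.zero_mod, if_neg (by omega)]

lemma decomp (a x : ℕ) :
    x = (x / p ^ (a+1)) * p ^ (a+1) + (dg p a x) * p ^ a + x % p ^ a := by
  have h1 := Nat.div_add_mod x (p ^ a)
  have h2 := Nat.div_add_mod (x / p ^ a) p
  have h3 : x / p ^ a / p = x / p ^ (a+1) := by
    rw [Nat.div_div_eq_div_mul, ← pow_succ]
  rw [dg]
  calc x = p ^ a * (x / p ^ a) + x % p ^ a := h1.symm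
  _ = p ^ a * (p * (x / p ^ (a+1)) + x / p ^ a % p) + x % p ^ a := by
      rw [← h3, h2]
  _ = (x / p ^ (a+1)) * p ^ (a+1) + (x / p ^ a % p) * p ^ a + x % p ^ a := by
      rw [pow_succ]; ring

lemma lt_pow_succ (hp : 2 ≤ p) {a c lo : ℕ} (hlo : lo < p ^ a) (hc : c < p) :
    c * p ^ a + lo < p ^ (a+1) := by
  have h2 : c * p ^ a + p ^ a = (c+1) * p ^ a := by ring
  have h3 : (c+1) * p ^ a ≤ p * p ^ a := Nat.mul_le_mul_right _ (by omega)
  have h4 : p * p ^ a = p ^ (a+1) := (pow_succ' p a).symm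
  omega

lemma form_div_mod (hp : 2 ≤ p) {a c lo : ℕ} (hi : ℕ) (hlo : lo < p ^ a) (hc : c < p) :
    (hi * p ^ (a+1) + c * p ^ a + lo) / p ^ a = hi * p + c ∧
    (hi * p ^ (a+1) + c * p ^ a + lo) % p ^ a = lo := by
  have hpa : 0 < p ^ a := (pow_pos (by omega : 0 < p) a)
  have e : hi * p ^ (a+1) + c * p ^ a + lo = lo + (hi * p + c) * p ^ a := by
    rw [pow_succ]; ring
  constructor
  · rw [e, Nat.add_mul_div_right _ _ hpa, Nat.div_eq_of_lt hlo, Nat.zero_add]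
  · rw [e, Nat.add_mul_mod_self_right, Nat.mod_eq_of_lt hlo]

lemma sd_form (hp : 2 ≤ p) {a c lo : ℕ} (hi : ℕ) (hlo : lo < p ^ a) (hc : c < p) :
    sigmaDigits p (hi * p ^ (a+1) + c * p ^ a + lo)
      = sigmaDigits p hi + c + sigmaDigits p lo := by
  obtain ⟨hd, hm⟩ := form_div_mod hp hi hlo hc
  have em : (hi * p + c) % p = c := by
    rw [Nat.add_comm, Nat.add_mul_mod_self_right, Nat.mod_eq_of_lt hc]
  have ed : (hi * p + c) / p = hi := by
    rw [Nat.add_comm, Nat.add_mul_div_right _ _ (show 0 < p by omega),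
      Nat.div_eq_of_lt hc, Nat.zero_add]
  rw [sd_split hp a, hd, hm, sd_step hp (hi * p + c), em, ed]
  omega

lemma dg_form (hp : 2 ≤ p) {a c lo : ℕ} (hi : ℕ) (hlo : lo < p ^ a) (hc : c < p) (j : ℕ) :
    dg p j (hi * p ^ (a+1) + c * p ^ a + lo)
      = if j < a then dg p j lo else if j = a then c else dg p (j - (a+1)) hi := by
  rcases lt_trichotomy j a with h | h | h
  · have e : hi * p ^ (a+1) + c * p ^ a + lo
        = lo + (p * (hi * p ^ (a - j) + c * p ^ (a - j - 1))) * p ^ j := by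
      have f1 : p * p ^ (a - j) * p ^ j = p ^ (a+1) := by
        rw [mul_assoc, ← pow_add, ← pow_succ']; congr 1; omega
      have f2 : p * p ^ (a - j - 1) * p ^ j = p ^ a := by
        rw [mul_assoc, ← pow_add, ← pow_succ']; congr 1; omega
      rw [← f1, ← f2]; ring
    rw [dg, e, Nat.add_mul_div_right _ _ ((pow_pos (by omega : 0 < p) j)),
      Nat.add_mul_mod_self_left, if_pos h]
    rfl
  · subst h
    rw [dg, (form_div_mod hp hi hlo hc).1, Nat.add_comm, Nat.add_mul_mod_self_right,
      Nat.mod_eq_of_lt hc, if_neg (lt_irrefl j), if_pos rfl]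
  · have hb : c * p ^ a + lo < p ^ (a+1) := lt_pow_succ hp hlo hc
    have e : (hi * p ^ (a+1) + c * p ^ a + lo) / p ^ (a+1) = hi := by
      rw [add_assoc, add_comm, Nat.add_mul_div_right _ _ ((pow_pos (by omega : 0 < p) (a+1))),
        Nat.div_eq_of_lt hb, Nat.zero_add]
    have e2 : p ^ j = p ^ (a+1) * p ^ (j - (a+1)) := by rw [← pow_add]; congr 1; omega
    rw [dg, e2, ← Nat.div_div_eq_div_mul, e, if_neg (by omega), if_neg (by omega)]
    rfl

lemma sd_dg_add (hp : 2 ≤ p) (x y : ℕ) (h : ∀ j, dg p j x + dg p j y ≤ p - 1) :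
    sigmaDigits p (x + y) = sigmaDigits p x + sigmaDigits p y ∧
    ∀ j, dg p j (x + y) = dg p j x + dg p j y := by
  induction x using Nat.strong_induction_on generalizing y with
  | _ x ih =>
    rcases Nat.eq_zero_or_pos x with h0 | h0
    · subst h0; simp [sd_zero, dg_zero]
    · have hx := Nat.div_add_mod x p
      have hy := Nat.div_add_mod y p
      have h00 : x % p + y % p ≤ p - 1 := by
        have := h 0; rwa [dg_zero_idx, dg_zero_idx] at this
      have e : x + y = (x % p + y % p) + p * (x / p + y / p) := by
        rw [Nat.mul_add]; omega
      have em : (x + y) % p = x % p + y % p := by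
        rw [e, Nat.add_mul_mod_self_left, Nat.mod_eq_of_lt (by omega)]
      have ed : (x + y) / p = x / p + y / p := by
        rw [e, Nat.add_mul_div_left _ _ (by omega : 0 < p),
          Nat.div_eq_of_lt (by omega)]
        omega
      have hrec : ∀ j, dg p j (x / p) + dg p j (y / p) ≤ p - 1 := by
        intro j; rw [dg_div, dg_div]; exact h (j+1)
      have hlt : x / p < x := Nat.div_lt_self h0 (by omega)
      obtain ⟨ihs, ihd⟩ := ih (x / p) hlt (y / p) hrec
      constructor
      · rw [sd_step hp (x + y), em, ed, ihs, sd_step hp x, sd_step hp y]; omega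
      · intro j
        cases j with
        | zero => rw [dg_zero_idx, dg_zero_idx, dg_zero_idx, em]
        | succ j => rw [← dg_div, ← dg_div, ← dg_div, ed, ihd j]

-- multiset statistics
def SS (p : ℕ) (s : Multiset ℕ) : ℕ := (s.map (sigmaDigits p)).sum
def TA (p a : ℕ) (s : Multiset ℕ) : ℕ := (s.map (dg p a)).sum
def QA (p a : ℕ) (s : Multiset ℕ) : ℕ := (s.map (fun x => dg p a x * dg p a x)).sum

@[simp] lemma SS_cons (x : ℕ) (s : Multiset ℕ) :
    SS p (x ::ₘ s) = sigmaDigits p x + SS p s := by simp [SS]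
@[simp] lemma TA_cons (a x : ℕ) (s : Multiset ℕ) :
    TA p a (x ::ₘ s) = dg p a x + TA p a s := by simp [TA]
@[simp] lemma QA_cons (a x : ℕ) (s : Multiset ℕ) :
    QA p a (x ::ₘ s) = dg p a x * dg p a x + QA p a s := by simp [QA]

lemma sd_pow_mul (hp : 2 ≤ p) {m : ℕ} (hm : m < p) (a : ℕ) :
    sigmaDigits p (m * p ^ a) = m := by
  have e : m * p ^ a = 0 * p ^ (a+1) + m * p ^ a + 0 := by ring
  rw [e, sd_form hp 0 ((pow_pos (by omega : 0 < p) a)) hm, sd_zero]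
  omega

lemma decomp' (hp : 2 ≤ p) (a x : ℕ) :
    ∃ HI LO, x = HI * p ^ (a+1) + dg p a x * p ^ a + LO ∧ LO < p ^ a := by
  exact ⟨x / p ^ (a+1), x % p ^ a, decomp a x,
    Nat.mod_lt _ ((pow_pos (by omega : 0 < p) a))⟩

lemma dg_mul_le (hp : 2 ≤ p) (a x : ℕ) : dg p a x * p ^ a ≤ x := by
  obtain ⟨HI, LO, hx, -⟩ := decomp' hp a x
  omega

lemma dg_mul_lt (hp : 2 ≤ p) (a x : ℕ) (hne : x ≠ dg p a x * p ^ a) :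
    dg p a x * p ^ a < x := by
  have h := dg_mul_le (p := p) hp a x
  omega

lemma donor (hp : 2 ≤ p) (a m x : ℕ) (hm : m ≤ dg p a x) :
    (x - m * p ^ a) + m * p ^ a = x ∧
    sigmaDigits p (x - m * p ^ a) + m = sigmaDigits p x ∧
    (∀ j, dg p j (x - m * p ^ a) + (if j = a then m else 0) = dg p j x) := by
  have hc : dg p a x < p := dg_lt hp a x
  obtain ⟨hi, lo, hx, hlo⟩ := decomp' hp a x
  set c := dg p a x with hcdef
  have hcm : c - m < p := by omega
  have hsplit : (c - m) * p ^ a + m * p ^ a = c * p ^ a := by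
    rw [← Nat.add_mul]; congr 1; omega
  have hx' : x - m * p ^ a = hi * p ^ (a+1) + (c - m) * p ^ a + lo := by omega
  refine ⟨by omega, ?_, ?_⟩
  · have e1 : sigmaDigits p x = sigmaDigits p hi + c + sigmaDigits p lo := by
      conv_lhs => rw [hx]
      exact sd_form hp hi hlo hc
    rw [hx', sd_form hp hi hlo hcm]
    omega
  · intro j
    have e1 : dg p j x = if j < a then dg p j lo else if j = a then c else dg p (j-(a+1)) hi := by
      conv_lhs => rw [hx]
      exact dg_form hp hi hlo hc j
    rw [hx', dg_form hp hi hlo hcm j, e1]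
    rcases lt_trichotomy j a with h | h | h
    · simp [h, if_pos h, if_neg (by omega : ¬ j = a)]
    · simp [h, if_neg (lt_irrefl a)]; omega
    · simp [if_neg (by omega : ¬ j < a), if_neg (by omega : ¬ j = a)]

lemma receiver_free (hp : 2 ≤ p) (a m y : ℕ) (hm' : dg p a y + m ≤ p - 1) :
    sigmaDigits p (m * p ^ a + y) = m + sigmaDigits p y ∧
    ∀ j, dg p j (m * p ^ a + y) = (if j = a then m else 0) + dg p j y := by
  have hmp : m < p := by omega
  have h : ∀ j, dg p j (m * p ^ a) + dg p j y ≤ p - 1 := by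
    intro j
    rw [dg_pow_mul hp hmp a j]
    rcases eq_or_ne j a with rfl | h
    · rw [if_pos rfl]; omega
    · have := dg_lt (p := p) hp j y
      rw [if_neg h]; omega
  obtain ⟨h1, h2⟩ := sd_dg_add hp (m * p ^ a) y h
  refine ⟨?_, ?_⟩
  · rw [h1, sd_pow_mul hp hmp]
  · intro j; rw [h2 j, dg_pow_mul hp hmp]

lemma receiver_carry (hp : 2 ≤ p) (a y : ℕ) (hcy : 1 ≤ dg p a y) :
    sigmaDigits p ((p - dg p a y) * p ^ a + y) + dg p a y ≤ sigmaDigits p y + 1 := by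
  have hc : dg p a y < p := dg_lt hp a y
  obtain ⟨HI, LO, hy, hlo⟩ := decomp' hp a y
  set c := dg p a y with hcdef
  have e : (p - c) * p ^ a + y = (HI + 1) * p ^ (a+1) + 0 * p ^ a + LO := by
    have e2 : (p - c) * p ^ a + c * p ^ a = p ^ (a+1) := by
      rw [← Nat.add_mul, show p - c + c = p by omega, ← pow_succ']
    have e3 : (HI + 1) * p ^ (a+1) = HI * p ^ (a+1) + p ^ (a+1) := by ring
    omega
  have hsy : sigmaDigits p y = sigmaDigits p HI + c + sigmaDigits p LO := by
    conv_lhs => rw [hy]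
    exact sd_form hp HI hlo hc
  rw [e, sd_form hp (HI+1) hlo (by omega : 0 < p), hsy]
  have := sd_succ_le hp HI
  omega

lemma pos_cons₂ {x y : ℕ} {u : Multiset ℕ} (hx : 0 < x) (hy : 0 < y)
    (hu : ∀ w ∈ u, 0 < w) : ∀ w ∈ (x ::ₘ y ::ₘ u), 0 < w := by
  intro w hw
  rcases Multiset.mem_cons.1 hw with rfl | hw
  · exact hx
  rcases Multiset.mem_cons.1 hw with rfl | hw
  · exact hy
  exact hu w hw

/-- Core move: donate `m` units of `p^a` from `x` to `y`. -/
lemma move_core (hp : 2 ≤ p) (a m x y : ℕ) (u : Multiset ℕ)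
    (hm1 : 1 ≤ m) (hmc : m ≤ dg p a x) (hrem : m * p ^ a < x) :
    AnnStep p (x ::ₘ y ::ₘ u) ((x - m * p ^ a) ::ₘ (m * p ^ a + y) ::ₘ u) := by
  obtain ⟨he, hs, hd⟩ := donor hp a m x hmc
  refine ⟨x, y, x - m * p ^ a, m * p ^ a, u, rfl, by omega,
    Nat.mul_pos (by omega) ((pow_pos (by omega : 0 < p) a)), he, ?_, rfl⟩
  rw [sd_pow_mul hp (by have := dg_lt (p := p) hp a x; omega : m < p) a]
  omega

/-- A carry-free move: all statistics controlled. -/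
lemma move_free (hp : 2 ≤ p) (a m x y : ℕ) (u : Multiset ℕ)
    (hm1 : 1 ≤ m) (hmc : m ≤ dg p a x) (hrem : m * p ^ a < x)
    (hrecv : dg p a y + m ≤ p - 1) :
    AnnStep p (x ::ₘ y ::ₘ u) ((x - m * p ^ a) ::ₘ (m * p ^ a + y) ::ₘ u) ∧
    SS p ((x - m * p ^ a) ::ₘ (m * p ^ a + y) ::ₘ u) = SS p (x ::ₘ y ::ₘ u) ∧
    (∀ j, TA p j ((x - m * p ^ a) ::ₘ (m * p ^ a + y) ::ₘ u) = TA p j (x ::ₘ y ::ₘ u)) ∧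
    QA p a ((x - m * p ^ a) ::ₘ (m * p ^ a + y) ::ₘ u) + 2 * m * dg p a x
      = QA p a (x ::ₘ y ::ₘ u) + 2 * m * (dg p a y + m) ∧
    (∀ j, j ≠ a → QA p j ((x - m * p ^ a) ::ₘ (m * p ^ a + y) ::ₘ u) = QA p j (x ::ₘ y ::ₘ u)) := by
  obtain ⟨he, hs, hd⟩ := donor hp a m x hmc
  obtain ⟨hs', hd'⟩ := receiver_free hp a m y hrecv
  refine ⟨move_core hp a m x y u hm1 hmc hrem, ?_, ?_, ?_, ?_⟩
  · simp only [SS_cons]; omega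
  · intro j
    have h1 := hd j
    have h2 := hd' j
    simp only [TA_cons, h2]
    rcases eq_or_ne j a with rfl | h
    · rw [if_pos rfl] at h1 h2 ⊢; omega
    · rw [if_neg h] at h1 h2 ⊢; omega
  · have h1 := hd a
    have h2 := hd' a
    rw [if_pos rfl] at h1 h2
    simp only [QA_cons, h2]
    have hxa : dg p a (x - m * p ^ a) = dg p a x - m := by omega
    rw [hxa]
    have hc := hmc
    nlinarith [hc]
  · intro j hj
    have h1 := hd j
    have h2 := hd' j
    rw [if_neg hj] at h1 h2
    have e1 : dg p j (x - m * p ^ a) = dg p j x := by omega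
    simp only [QA_cons, h2, e1, Nat.zero_add]

/-- A carrying move: `SS` strictly decreases. -/
lemma move_carry (hp : 2 ≤ p) (a x y : ℕ) (u : Multiset ℕ)
    (hcy : 1 ≤ dg p a y) (hcyp : dg p a y ≤ p - 1)
    (hmc : p - dg p a y ≤ dg p a x) (hrem : (p - dg p a y) * p ^ a < x) :
    AnnStep p (x ::ₘ y ::ₘ u)
      ((x - (p - dg p a y) * p ^ a) ::ₘ ((p - dg p a y) * p ^ a + y) ::ₘ u) ∧
    SS p ((x - (p - dg p a y) * p ^ a) ::ₘ ((p - dg p a y) * p ^ a + y) ::ₘ u)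
      < SS p (x ::ₘ y ::ₘ u) := by
  set m := p - dg p a y with hm
  obtain ⟨he, hs, hd⟩ := donor hp a m x hmc
  have hrc := receiver_carry hp a y hcy
  refine ⟨move_core hp a m x y u (by omega) hmc hrem, ?_⟩
  simp only [SS_cons]
  rw [← hm] at hrc
  have hq : m + dg p a y = p := by omega
  omega

lemma exists_max (s : Multiset ℕ) (hs : s ≠ 0) (f : ℕ → ℕ) :
    ∃ x ∈ s, ∀ w ∈ s, f w ≤ f x := by
  induction s using Multiset.induction_on with
  | empty => exact absurd rfl hs
  | cons b t ih =>
    rcases Multiset.empty_or_exists_mem t with rfl | ⟨c, hc⟩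
    · exact ⟨b, Multiset.mem_cons_self _ _, by
        intro w hw
        rcases Multiset.mem_cons.1 hw with rfl | hw
        · exact le_refl _
        · simp at hw⟩
    · obtain ⟨x, hx, hmax⟩ := ih (by rintro rfl; simp at hc)
      rcases le_total (f b) (f x) with h | h
      · exact ⟨x, Multiset.mem_cons_of_mem hx, by
          intro w hw
          rcases Multiset.mem_cons.1 hw with rfl | hw
          · exact h
          · exact hmax w hw⟩
      · exact ⟨b, Multiset.mem_cons_self _ _, by
          intro w hw
          rcases Multiset.mem_cons.1 hw with rfl | hw
          · exact le_refl _
          · exact le_trans (hmax w hw) h⟩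

lemma exists_pos_dg {a : ℕ} {s : Multiset ℕ} (h : 1 ≤ TA p a s) :
    ∃ x ∈ s, 1 ≤ dg p a x := by
  by_contra hc
  push_neg at hc
  have : TA p a s = 0 := by
    rw [TA]
    apply Multiset.sum_eq_zero
    intro w hw
    obtain ⟨x, hx, rfl⟩ := Multiset.mem_map.1 hw
    have := hc x hx
    omega
  omega

lemma QA_le (hp : 2 ≤ p) (a : ℕ) (s : Multiset ℕ) :
    QA p a s ≤ (p - 1) * TA p a s := by
  induction s using Multiset.induction_on with
  | empty => simp [QA, TA]
  | cons b t ih =>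
    simp only [QA_cons, TA_cons, Nat.mul_add]
    have h1 : dg p a b * dg p a b ≤ (p - 1) * dg p a b :=
      Nat.mul_le_mul_right _ (by have := dg_lt (p := p) hp a b; omega)
    omega

lemma exists_unit (hp : 2 ≤ p) {z : ℕ} (hz2 : 2 ≤ sigmaDigits p z) :
    ∃ b, 1 ≤ dg p b z ∧ p ^ b < z := by
  induction z using Nat.strong_induction_on with
  | _ z ih =>
    have hz0 : z ≠ 0 := by
      rintro rfl; rw [sd_zero] at hz2; omega
    rcases Nat.eq_zero_or_pos (z % p) with h0 | h0
    · have hzp : p ≤ z := Nat.le_of_dvd (by omega) (Nat.dvd_of_mod_eq_zero h0)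
      have hd2 : 2 ≤ sigmaDigits p (z / p) := by
        have := sd_step hp z; omega
      have hlt : z / p < z := Nat.div_lt_self (by omega) (by omega)
      obtain ⟨b, hb1, hb2⟩ := ih (z / p) hlt hd2
      refine ⟨b + 1, ?_, ?_⟩
      · rwa [← dg_div]
      · have h1 : p ^ b + 1 ≤ z / p := hb2
        have h2 : p * (p ^ b + 1) ≤ p * (z / p) := Nat.mul_le_mul_left _ h1
        have h3 : p * (z / p) ≤ z := Nat.mul_div_le z p
        have h4 : p ^ (b+1) = p * p ^ b := pow_succ' p b
        have h5 : p * (p ^ b + 1) = p * p ^ b + p := by ring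
        omega
    · refine ⟨0, by rwa [dg_zero_idx], ?_⟩
      rcases Nat.lt_or_ge z p with h | h
      · have := sd_lt hp h
        simp only [pow_zero]
        omega
      · simp only [pow_zero]; omega

lemma sum_map_filter_split (f : ℕ → ℕ) (q : ℕ → Prop) [DecidablePred q] (s : Multiset ℕ) :
    (s.map f).sum = ((s.filter q).map f).sum + ((s.filter (fun w => ¬ q w)).map f).sum := by
  have hsplit : s.filter q + s.filter (fun w => ¬ q w) = s := Multiset.filter_add_not _ s
  calc (s.map f).sum = ((s.filter q + s.filter (fun w => ¬ q w)).map f).sum := by rw [hsplit]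
  _ = ((s.filter q).map f).sum + ((s.filter (fun w => ¬ q w)).map f).sum := by
      rw [Multiset.map_add, Multiset.sum_add]

lemma card_filter_split (q : ℕ → Prop) [DecidablePred q] (s : Multiset ℕ) :
    Multiset.card s = Multiset.card (s.filter q)
      + Multiset.card (s.filter (fun w => ¬ q w)) := by
  have hsplit : s.filter q + s.filter (fun w => ¬ q w) = s := Multiset.filter_add_not _ s
  conv_lhs => rw [← hsplit]
  rw [Multiset.card_add]

lemma exists_fat (hp : 2 ≤ p) (a : ℕ) (s : Multiset ℕ)
    (hpure : ∀ w ∈ s, 1 ≤ dg p a w → w = dg p a w * p ^ a)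
    (hcard : Multiset.card s + (p - 1) ≤ SS p s)
    (hbound : TA p a s + 2 ≤ (s.filter (fun w => 1 ≤ dg p a w)).card + p) :
    ∃ z ∈ s, dg p a z = 0 ∧ 2 ≤ sigmaDigits p z := by
  by_contra hcon
  push_neg at hcon
  have hSS := sum_map_filter_split (sigmaDigits p) (fun w => 1 ≤ dg p a w) s
  have hTA := sum_map_filter_split (dg p a) (fun w => 1 ≤ dg p a w) s
  have hcardsum := card_filter_split (fun w => 1 ≤ dg p a w) s
  have hTA0 : ((s.filter (fun w => ¬ 1 ≤ dg p a w)).map (dg p a)).sum = 0 := by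
    apply Multiset.sum_eq_zero
    intro w hw
    obtain ⟨x, hx, rfl⟩ := Multiset.mem_map.1 hw
    have := (Multiset.mem_filter.1 hx).2
    omega
  have hSS1 : ((s.filter (fun w => 1 ≤ dg p a w)).map (sigmaDigits p)).sum
      = ((s.filter (fun w => 1 ≤ dg p a w)).map (dg p a)).sum := by
    congr 1
    apply Multiset.map_congr rfl
    intro w hw
    have h1 : 1 ≤ dg p a w := (Multiset.mem_filter.1 hw).2
    have h2 := hpure w (Multiset.mem_filter.1 hw).1 h1
    conv_lhs => rw [h2]
    exact sd_pow_mul hp (dg_lt hp a w) a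
  have hSS0 : ((s.filter (fun w => ¬ 1 ≤ dg p a w)).map (sigmaDigits p)).sum
      ≤ Multiset.card (s.filter (fun w => ¬ 1 ≤ dg p a w)) := by
    have hb : ∀ x ∈ (s.filter (fun w => ¬ 1 ≤ dg p a w)).map (sigmaDigits p), x ≤ 1 := by
      intro x hx
      obtain ⟨w, hw, rfl⟩ := Multiset.mem_map.1 hx
      have h1 : ¬ 1 ≤ dg p a w := (Multiset.mem_filter.1 hw).2
      have h2 := hcon w (Multiset.mem_filter.1 hw).1 (by omega)
      omega
    calc ((s.filter (fun w => ¬ 1 ≤ dg p a w)).map (sigmaDigits p)).sum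
        ≤ Multiset.card ((s.filter (fun w => ¬ 1 ≤ dg p a w)).map (sigmaDigits p)) * 1 :=
          Multiset.sum_le_card_nsmul _ _ hb
    _ = Multiset.card (s.filter (fun w => ¬ 1 ≤ dg p a w)) := by simp
  rw [SS] at hcard
  rw [TA] at hbound
  omega

lemma do_carry (hp : 2 ≤ p) {s : Multiset ℕ} {a x y : ℕ} {u : Multiset ℕ}
    (hEq : s = x ::ₘ y ::ₘ u) (hcy : 1 ≤ dg p a y)
    (hmc : p - dg p a y ≤ dg p a x) (hrem : (p - dg p a y) * p ^ a < x) :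
    ∃ t, Relation.ReflTransGen (AnnStep p) s t ∧ SS p t < SS p s := by
  have hcyp : dg p a y ≤ p - 1 := by have := dg_lt (p := p) hp a y; omega
  obtain ⟨hstep, hlt⟩ := move_carry hp a x y u hcy hcyp hmc hrem
  exact ⟨_, Relation.ReflTransGen.single (hEq ▸ hstep), by rw [hEq]; exact hlt⟩

lemma do_free (hp : 2 ≤ p) {s : Multiset ℕ} {a m x y : ℕ} {u : Multiset ℕ}
    (hEq : s = x ::ₘ y ::ₘ u) (hpos : ∀ w ∈ s, 0 < w)
    (hm1 : 1 ≤ m) (hmc : m ≤ dg p a x) (hrem : m * p ^ a < x)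
    (hrecv : dg p a y + m ≤ p - 1) (hconv : dg p a x < dg p a y + m) :
    ∃ t, Relation.ReflTransGen (AnnStep p) s t ∧
      SS p t = SS p s ∧ TA p a t = TA p a s ∧ Multiset.card t = Multiset.card s ∧
      (∀ w ∈ t, 0 < w) ∧ QA p a s < QA p a t := by
  obtain ⟨hstep, hSS, hTA, hQA, -⟩ := move_free hp a m x y u hm1 hmc hrem hrecv
  have hposy : 0 < y := hpos y (by rw [hEq]; exact Multiset.mem_cons_of_mem (Multiset.mem_cons_self _ _))
  have hposu : ∀ w ∈ u, 0 < w := fun w hw => hpos w (by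
    rw [hEq]; exact Multiset.mem_cons_of_mem (Multiset.mem_cons_of_mem hw))
  have hmul : 2 * m * dg p a x < 2 * m * (dg p a y + m) :=
    (Nat.mul_lt_mul_left (by omega : 0 < 2 * m)).2 hconv
  refine ⟨_, Relation.ReflTransGen.single (hEq ▸ hstep), by rw [hEq]; exact hSS,
    by rw [hEq]; exact hTA a, by rw [hEq]; simp, ?_, by rw [hEq]; omega⟩
  exact pos_cons₂ (by omega) (by omega) hposu

lemma TA_eq_zero {a : ℕ} {s : Multiset ℕ} (h : ∀ w ∈ s, dg p a w = 0) :
    TA p a s = 0 := by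
  apply Multiset.sum_eq_zero
  intro w hw
  obtain ⟨x, hx, rfl⟩ := Multiset.mem_map.1 hw
  exact h x hx

lemma stepCase (hp : 2 ≤ p) (a : ℕ) (s : Multiset ℕ)
    (hpos : ∀ w ∈ s, 0 < w) (hTa : p ≤ TA p a s)
    (hSc : Multiset.card s + (p - 1) ≤ SS p s) :
    ∃ t, Relation.ReflTransGen (AnnStep p) s t ∧
      (SS p t < SS p s ∨
        (SS p t = SS p s ∧ TA p a t = TA p a s ∧ Multiset.card t = Multiset.card s ∧
         (∀ w ∈ t, 0 < w) ∧ QA p a s < QA p a t)) := by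
  -- the part `y` with maximal digit
  have hs0 : s ≠ 0 := by
    rintro rfl; simp [TA] at hTa; omega
  obtain ⟨y, hy, hymax⟩ := exists_max s hs0 (dg p a)
  obtain ⟨w0, hw0, hw01⟩ := exists_pos_dg (p := p) (a := a) (s := s) (by omega)
  have hcy1 : 1 ≤ dg p a y := le_trans hw01 (hymax w0 hw0)
  have hcyp : dg p a y ≤ p - 1 := by have := dg_lt (p := p) hp a y; omega
  obtain ⟨r, hr⟩ := Multiset.exists_cons_of_mem hy
  have hTar : 1 ≤ TA p a r := by
    rw [hr, TA_cons] at hTa; omega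
  obtain ⟨w1, hw1, hw11⟩ := exists_pos_dg (p := p) (a := a) (s := r) hTar
  have hr0 : r ≠ 0 := by rintro rfl; simp at hw1
  obtain ⟨x, hx, hxmax⟩ := exists_max r hr0 (dg p a)
  have hx_s : x ∈ s := by rw [hr]; exact Multiset.mem_cons_of_mem hx
  have hcx1 : 1 ≤ dg p a x := le_trans hw11 (hxmax w1 hw1)
  have hcxy : dg p a x ≤ dg p a y := hymax x hx_s
  obtain ⟨u, hu⟩ := Multiset.exists_cons_of_mem hx
  have hEq1 : s = y ::ₘ x ::ₘ u := by rw [hr, hu]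
  have hEq2 : s = x ::ₘ y ::ₘ u := by rw [hEq1, Multiset.cons_swap]
  by_cases hAnon : ∃ w ∈ r, 1 ≤ dg p a w ∧ w ≠ dg p a w * p ^ a
  · -- a nonpure a-part exists among `r` : donor it into `y`
    obtain ⟨w, hwr, hw1d, hwnp⟩ := hAnon
    obtain ⟨u', hu'⟩ := Multiset.exists_cons_of_mem hwr
    have hEq : s = w ::ₘ y ::ₘ u' := by rw [hr, hu', Multiset.cons_swap]
    have hwlt : dg p a w * p ^ a < w := dg_mul_lt hp a w (fun h => hwnp h)
    have hw_s : w ∈ s := by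
      rw [hr, hu']
      exact Multiset.mem_cons_of_mem (Multiset.mem_cons_self _ _)
    have hcwy : dg p a w ≤ dg p a y := hymax w hw_s
    by_cases hsum : p ≤ dg p a w + dg p a y
    · obtain ⟨t, h1, h2⟩ := do_carry hp hEq hcy1 (by omega)
        (lt_of_le_of_lt (Nat.mul_le_mul_right _ (by omega)) hwlt)
      exact ⟨t, h1, Or.inl h2⟩
    · obtain ⟨t, h1, h2⟩ := do_free hp hEq hpos hw1d (le_refl _) hwlt
        (by omega) (by omega)
      exact ⟨t, h1, Or.inr h2⟩
  · push_neg at hAnon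
    have hrpure : ∀ w ∈ r, 1 ≤ dg p a w → w = dg p a w * p ^ a := hAnon
    have hxpure : x = dg p a x * p ^ a := hrpure x hx hcx1
    by_cases hypure : y = dg p a y * p ^ a
    case neg =>
      -- `y` nonpure : donor y into x ; s = y ::ₘ x ::ₘ u
      have hylt : dg p a y * p ^ a < y := dg_mul_lt hp a y (fun h => hypure h)
      by_cases hsum : p ≤ dg p a x + dg p a y
      · obtain ⟨t, h1, h2⟩ := do_carry hp hEq1 hcx1 (by omega)
          (lt_of_le_of_lt (Nat.mul_le_mul_right _ (by omega)) hylt)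
        exact ⟨t, h1, Or.inl h2⟩
      · obtain ⟨t, h1, h2⟩ := do_free hp hEq1 hpos hcy1 (le_refl _) hylt
          (by omega) (by omega)
        exact ⟨t, h1, Or.inr h2⟩
    case pos =>
      have hppos : 0 < p ^ a := (pow_pos (by omega : 0 < p) a)
      by_cases hsum1 : p + 1 ≤ dg p a x + dg p a y
      · -- carry donor x receiver y with m = p - cy < cx
        have hrem : (p - dg p a y) * p ^ a < x := by
          calc (p - dg p a y) * p ^ a < dg p a x * p ^ a :=
                (Nat.mul_lt_mul_right hppos).2 (by omega)
          _ = x := hxpure.symm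
        obtain ⟨t, h1, h2⟩ := do_carry hp hEq2 hcy1 (by omega) hrem
        exact ⟨t, h1, Or.inl h2⟩
      · by_cases hcx2 : 2 ≤ dg p a x
        · -- donate cx - 1 from x to y
          have hrem : (dg p a x - 1) * p ^ a < x := by
            calc (dg p a x - 1) * p ^ a < dg p a x * p ^ a :=
                  (Nat.mul_lt_mul_right hppos).2 (by omega)
            _ = x := hxpure.symm
          obtain ⟨t, h1, h2⟩ := do_free hp hEq2 hpos (m := dg p a x - 1)
            (by omega) (by omega) hrem (by omega) (by omega)
          exact ⟨t, h1, Or.inr h2⟩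
        · -- cx = 1 : fatten branch
          have hcx : dg p a x = 1 := by omega
          have hball : ∀ w ∈ r, dg p a w ≤ 1 := by
            intro w hw; exact le_trans (hxmax w hw) (by omega)
          -- existence of z
          have hbound : TA p a s + 2 ≤ (s.filter (fun w => 1 ≤ dg p a w)).card + p := by
            have hTAr := sum_map_filter_split (dg p a) (fun w => 1 ≤ dg p a w) r
            have hTA0 : ((r.filter (fun w => ¬ 1 ≤ dg p a w)).map (dg p a)).sum = 0 := by
              apply Multiset.sum_eq_zero
              intro v hv
              obtain ⟨z, hz, rfl⟩ := Multiset.mem_map.1 hv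
              have := (Multiset.mem_filter.1 hz).2
              omega
            have hTA1 : ((r.filter (fun w => 1 ≤ dg p a w)).map (dg p a)).sum
                ≤ Multiset.card (r.filter (fun w => 1 ≤ dg p a w)) := by
              have hb : ∀ v ∈ (r.filter (fun w => 1 ≤ dg p a w)).map (dg p a), v ≤ 1 := by
                intro v hv
                obtain ⟨z, hz, rfl⟩ := Multiset.mem_map.1 hv
                exact hball z (Multiset.mem_filter.1 hz).1
              calc ((r.filter (fun w => 1 ≤ dg p a w)).map (dg p a)).sum
                  ≤ Multiset.card ((r.filter (fun w => 1 ≤ dg p a w)).map (dg p a)) * 1 :=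
                    Multiset.sum_le_card_nsmul _ _ hb
              _ = Multiset.card (r.filter (fun w => 1 ≤ dg p a w)) := by simp
            have hfilts : s.filter (fun w => 1 ≤ dg p a w)
                = y ::ₘ r.filter (fun w => 1 ≤ dg p a w) := by
              rw [hr]; exact Multiset.filter_cons_of_pos _ hcy1
            rw [hfilts, Multiset.card_cons, hr, TA_cons]
            have h1 : TA p a r = TA p a (r.filter (fun w => 1 ≤ dg p a w))
                + TA p a (r.filter (fun w => ¬ 1 ≤ dg p a w)) := hTAr
            have h2 : TA p a (r.filter (fun w => ¬ 1 ≤ dg p a w)) = 0 := hTA0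
            have h3 : TA p a (r.filter (fun w => 1 ≤ dg p a w))
                ≤ Multiset.card (r.filter (fun w => 1 ≤ dg p a w)) := hTA1
            omega
          have hspure : ∀ w ∈ s, 1 ≤ dg p a w → w = dg p a w * p ^ a := by
            intro w hw h1
            rw [hr] at hw
            rcases Multiset.mem_cons.1 hw with rfl | hw
            · exact hypure
            · exact hrpure w hw h1
          obtain ⟨z, hzs, hz0, hz2⟩ := exists_fat hp a s hspure hSc hbound
          -- z is distinct from y and x as values
          have hzy : z ≠ y := by intro h; rw [h] at hz0; omega
          have hzx : z ≠ x := by intro h; rw [h, hcx] at hz0; simp [hz0] at hcx; omega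
          have hzu : z ∈ u := by
            rw [hEq1] at hzs
            rcases Multiset.mem_cons.1 hzs with h | h
            · exact absurd h hzy
            rcases Multiset.mem_cons.1 h with h' | h'
            · exact absurd h' hzx
            · exact h'
          obtain ⟨v, hv⟩ := Multiset.exists_cons_of_mem hzu
          have hEq3 : s = y ::ₘ x ::ₘ z ::ₘ v := by rw [hEq1, hv]
          obtain ⟨b, hb1, hb2⟩ := exists_unit hp hz2
          have hba : b ≠ a := by intro h; rw [h] at hb1; omega
          -- step 1 : move p^b from z to x
          have hEqA : s = z ::ₘ x ::ₘ (y ::ₘ v) := by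
            rw [hEq3, Multiset.cons_swap y x, Multiset.cons_swap y z]
            rw [Multiset.cons_swap x z]
          have hdgbx : dg p b x = 0 := by
            rw [hxpure, hcx]
            rw [dg_pow_mul hp (by omega) a b, if_neg hba]
          obtain ⟨hstep1, hSS1, hTA1, hQAa1, hQAj1⟩ := move_free hp b 1 z x (y ::ₘ v)
            (le_refl _) (by simpa using hb1) (by simpa using hb2) (by rw [hdgbx]; omega)
          set x' : ℕ := 1 * p ^ b + x with hx'
          set z' : ℕ := z - 1 * p ^ b with hz'
          have ht1 : AnnStep p s (z' ::ₘ x' ::ₘ (y ::ₘ v)) := hEqA ▸ hstep1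
          -- digit of x' at a
          have hdgax' : dg p a x' = 1 := by
            rw [hx', (receiver_free hp b 1 x (by rw [hdgbx]; omega)).2 a,
              if_neg (fun h => hba h.symm), hcx]
          have hposz' : 0 < z' := by
            rw [hz']; simp only [one_mul]; omega
          have hposx' : 0 < x' := by
            rw [hx']; positivity
          have hposyv : ∀ w ∈ (y ::ₘ v), 0 < w := by
            intro w hw
            apply hpos
            rcases Multiset.mem_cons.1 hw with rfl | hw
            · exact hy
            · rw [hEq3]
              exact Multiset.mem_cons_of_mem (Multiset.mem_cons_of_mem
                (Multiset.mem_cons_of_mem hw))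
          have hposall : ∀ w ∈ (z' ::ₘ x' ::ₘ (y ::ₘ v)), 0 < w :=
            pos_cons₂ hposz' hposx' hposyv
          -- reorder for step 2
          have hEqB : z' ::ₘ x' ::ₘ (y ::ₘ v) = x' ::ₘ y ::ₘ (z' ::ₘ v) := by
            rw [Multiset.cons_swap z' x', Multiset.cons_swap z' y]
          have hrem2 : 1 * p ^ a < x' := by
            have hxval : x = 1 * p ^ a := by rw [hxpure, hcx]
            have hpb : 0 < p ^ b := (pow_pos (by omega : 0 < p) b)
            rw [hx']
            omega
          -- dg at a of y is unchanged, SS etc computed on s via hEqA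
          have hSSeq : SS p (z' ::ₘ x' ::ₘ (y ::ₘ v)) = SS p s := by rw [hEqA]; exact hSS1
          have hTAeq : ∀ j, TA p j (z' ::ₘ x' ::ₘ (y ::ₘ v)) = TA p j s := by
            intro j; rw [hEqA]; exact hTA1 j
          have hQAeq : QA p a (z' ::ₘ x' ::ₘ (y ::ₘ v)) = QA p a s := by
            rw [hEqA]; exact hQAj1 a (Ne.symm hba)
          have hcard1 : Multiset.card (z' ::ₘ x' ::ₘ (y ::ₘ v)) = Multiset.card s := by
            rw [hEqA]; simp
          by_cases hfin : p ≤ 1 + dg p a y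
          · -- carry on step 2
            obtain ⟨t, h1, h2⟩ := do_carry hp hEqB hcy1 (by rw [hdgax']; omega)
              (by have : p - dg p a y = 1 := by omega
                  rw [this]; exact hrem2)
            refine ⟨t, Relation.ReflTransGen.head ht1 h1, Or.inl ?_⟩
            rw [← hSSeq]; exact h2
          · -- free move on step 2
            obtain ⟨t, h1, h2, h3, h4, h5, h6⟩ := do_free hp hEqB hposall
              (m := 1) (le_refl _) (by rw [hdgax']) hrem2 (by omega)
              (by rw [hdgax']; omega)
            refine ⟨t, Relation.ReflTransGen.head ht1 h1, Or.inr ?_⟩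
            refine ⟨by rw [h2, hSSeq], by rw [h3, hTAeq a], by rw [h4, hcard1], h5, ?_⟩
            rw [← hQAeq]; exact h6

lemma mainStep (hp : 2 ≤ p) : ∀ (N : ℕ) (s : Multiset ℕ) (a : ℕ),
    (p - 1) * TA p a s - QA p a s ≤ N → (∀ w ∈ s, 0 < w) → p ≤ TA p a s →
    Multiset.card s + (p - 1) ≤ SS p s →
    ∃ t, Relation.ReflTransGen (AnnStep p) s t ∧ SS p t < SS p s := by
  intro N
  induction N with
  | zero =>
    intro s a hN hpos hTa hSc
    obtain ⟨t, hRTG, hcase⟩ := stepCase hp a s hpos hTa hSc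
    rcases hcase with h | ⟨hSS, hTA, hcard, hpos', hQA⟩
    · exact ⟨t, hRTG, h⟩
    · exfalso
      have hb := QA_le hp a t
      have hb' := QA_le hp a s
      rw [hTA] at hb
      omega
  | succ N ih =>
    intro s a hN hpos hTa hSc
    obtain ⟨t, hRTG, hcase⟩ := stepCase hp a s hpos hTa hSc
    rcases hcase with h | ⟨hSS, hTA, hcard, hpos', hQA⟩
    · exact ⟨t, hRTG, h⟩
    · have hb := QA_le hp a t
      rw [hTA] at hb
      obtain ⟨t', hRTG', hlt⟩ := ih t a (by rw [hTA]; omega) hpos' (by rw [hTA]; exact hTa)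
        (by rw [hcard, hSS]; exact hSc)
      exact ⟨t', hRTG.trans hRTG', by omega⟩

lemma card_le_SS (hp : 2 ≤ p) {s : Multiset ℕ} (hpos : ∀ w ∈ s, 0 < w) :
    Multiset.card s ≤ SS p s := by
  induction s using Multiset.induction_on with
  | empty => simp [SS]
  | cons b t ih =>
    have hb : 0 < sigmaDigits p b := sd_pos hp (hpos b (Multiset.mem_cons_self _ _))
    have ht := ih (fun w hw => hpos w (Multiset.mem_cons_of_mem hw))
    rw [SS_cons, Multiset.card_cons]
    omega

lemma no_overflow (hp : 2 ≤ p) (s : Multiset ℕ) (h : ∀ a, TA p a s ≤ p - 1) :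
    (∀ a, dg p a s.sum = TA p a s) ∧ SS p s = sigmaDigits p s.sum := by
  induction s using Multiset.induction_on with
  | empty => constructor <;> simp [TA, SS, sd_zero, dg_zero]
  | cons b t ih =>
    have ht : ∀ a, TA p a t ≤ p - 1 := by
      intro a; have := h a; rw [TA_cons] at this; omega
    obtain ⟨ihd, ihs⟩ := ih ht
    have hpair : ∀ j, dg p j b + dg p j t.sum ≤ p - 1 := by
      intro j
      rw [ihd j]
      have := h j; rw [TA_cons] at this; omega
    obtain ⟨hs, hd⟩ := sd_dg_add hp b t.sum hpair
    constructor
    · intro a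
      rw [Multiset.sum_cons, hd a, ihd a, TA_cons]
    · rw [SS_cons, Multiset.sum_cons, hs, ihs]

lemma exists_digit (hp : 2 ≤ p) (s : Multiset ℕ)
    (h : sigmaDigits p s.sum < SS p s) : ∃ a, p ≤ TA p a s := by
  by_contra hc
  push_neg at hc
  have := (no_overflow hp s (fun a => by have := hc a; omega)).2
  omega

lemma annStep_facts {μ ν : Multiset ℕ} (h : AnnStep p μ ν) :
    ν.sum = μ.sum ∧ Multiset.card ν = Multiset.card μ ∧
    ((∀ w ∈ μ, 0 < w) → ∀ w ∈ ν, 0 < w) := by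
  obtain ⟨x, y, A, B, u, h1, hA, hB, hAB, hσ, h2⟩ := h
  subst h1 h2
  refine ⟨by simp [Multiset.sum_cons]; omega, by simp, ?_⟩
  intro hpos w hw
  rcases Multiset.mem_cons.1 hw with rfl | hw
  · exact hA
  rcases Multiset.mem_cons.1 hw with rfl | hw
  · omega
  · exact hpos w (Multiset.mem_cons_of_mem (Multiset.mem_cons_of_mem hw))

lemma ann_facts {μ ν : Multiset ℕ} (h : Relation.ReflTransGen (AnnStep p) μ ν) :
    ν.sum = μ.sum ∧ Multiset.card ν = Multiset.card μ ∧
    ((∀ w ∈ μ, 0 < w) → ∀ w ∈ ν, 0 < w) := by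
  induction h with
  | refl => exact ⟨rfl, rfl, fun h => h⟩
  | tail hstep hlast ih =>
    obtain ⟨h1, h2, h3⟩ := ih
    obtain ⟨g1, g2, g3⟩ := annStep_facts hlast
    exact ⟨g1.trans h1, g2.trans h2, fun hp => g3 (h3 hp)⟩

lemma prod_factorial_dvd (s : Multiset ℕ) : (s.map Nat.factorial).prod ∣ Nat.factorial s.sum := by
  induction s using Multiset.induction_on with
  | empty => simp
  | cons b t ih =>
    simp only [Multiset.map_cons, Multiset.prod_cons, Multiset.sum_cons]
    exact (mul_dvd_mul_left _ ih).trans (Nat.factorial_mul_factorial_dvd_factorial_add _ _)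

lemma prod_factorial_pos (s : Multiset ℕ) : 0 < (s.map Nat.factorial).prod := by
  induction s using Multiset.induction_on with
  | empty => simp
  | cons b t ih =>
    simp only [Multiset.map_cons, Multiset.prod_cons]
    exact Nat.mul_pos (Nat.factorial_pos b) ih

lemma val_prod_fact (hpp : p.Prime) (s : Multiset ℕ) :
    padicValNat p ((s.map Nat.factorial).prod)
      = (s.map (fun x => padicValNat p (Nat.factorial x))).sum := by
  haveI : Fact p.Prime := ⟨hpp⟩
  induction s using Multiset.induction_on with
  | empty => simp
  | cons b t ih =>
    simp only [Multiset.map_cons, Multiset.prod_cons, Multiset.sum_cons]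
    rw [padicValNat.mul (Nat.factorial_ne_zero b) (prod_factorial_pos t).ne', ih]

lemma leg_elem (hpp : p.Prime) (x : ℕ) :
    (p - 1) * padicValNat p (Nat.factorial x) + sigmaDigits p x = x := by
  haveI : Fact p.Prime := ⟨hpp⟩
  have h := sub_one_mul_padicValNat_factorial (p := p) x
  have h2 : sigmaDigits p x ≤ x := sd_le x
  have h3 : sigmaDigits p x = (p.digits x).sum := rfl
  rw [h3] at h2 ⊢
  omega

lemma leg_sum (hpp : p.Prime) (s : Multiset ℕ) :
    (p - 1) * (s.map (fun x => padicValNat p (Nat.factorial x))).sum + SS p s = s.sum := by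
  induction s using Multiset.induction_on with
  | empty => simp [SS]
  | cons b t ih =>
    simp only [Multiset.map_cons, Multiset.sum_cons, SS_cons]
    have := leg_elem hpp b
    rw [Nat.mul_add]
    omega

lemma alpha_identity (hpp : p.Prime) (s : Multiset ℕ) :
    (p - 1) * alphaCarry p s + sigmaDigits p s.sum = SS p s := by
  haveI : Fact p.Prime := ⟨hpp⟩
  have hp : 2 ≤ p := hpp.two_le
  have hdvd : (s.map Nat.factorial).prod ∣ Nat.factorial s.sum := prod_factorial_dvd s
  have hP0 : (s.map Nat.factorial).prod ≠ 0 := (prod_factorial_pos s).ne'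
  have hM0 : Nat.factorial s.sum / (s.map Nat.factorial).prod ≠ 0 :=
    (Nat.div_pos (Nat.le_of_dvd (Nat.factorial_pos _) hdvd) (prod_factorial_pos s)).ne'
  have hM : Nat.factorial s.sum = (s.map Nat.factorial).prod * (Nat.factorial s.sum / (s.map Nat.factorial).prod) :=
    (Nat.mul_div_cancel' hdvd).symm
  have hval : padicValNat p (Nat.factorial s.sum)
      = padicValNat p ((s.map Nat.factorial).prod)
        + padicValNat p (Nat.factorial s.sum / (s.map Nat.factorial).prod) := by
    conv_lhs => rw [hM]
    exact padicValNat.mul hP0 hM0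
  have hL := leg_elem hpp s.sum
  have hLs := leg_sum hpp s
  have hvp := val_prod_fact hpp s
  have halpha : alphaCarry p s = padicValNat p (Nat.factorial s.sum / (s.map Nat.factorial).prod) := rfl
  rw [halpha]
  rw [hvp] at hval
  rw [hval, Nat.mul_add] at hL
  omega

theorem statement13' (p : ℕ) (hp : p.Prime) (lam : Multiset ℕ)
    (hpos : ∀ x ∈ lam, 0 < x) (hmin : ¬ IsCarryMin p lam) :
    ∃ lam' ∈ annSet p lam, alphaCarry p lam' < alphaCarry p lam := by
  have hp2 : 2 ≤ p := hp.two_le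
  rw [IsCarryMin] at hmin
  push_neg at hmin
  obtain ⟨t0, ht0pos, ht0sum, ht0card, ht0a⟩ := hmin
  obtain ⟨n0, hn0mem, hn0min⟩ := Nat.lt_wfRel.wf.has_min
    {n | ∃ ν ∈ annSet p lam, SS p ν = n} ⟨SS p lam, lam, Relation.ReflTransGen.refl, rfl⟩
  obtain ⟨μ, hμmem, hμSS⟩ := hn0mem
  have hμR : Relation.ReflTransGen (AnnStep p) lam μ := hμmem
  obtain ⟨hμsum, hμcard, hμposf⟩ := ann_facts hμR
  have hμpos := hμposf hpos
  have idlam := alpha_identity hp lam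
  have idμ := alpha_identity hp μ
  have idt0 := alpha_identity hp t0
  rw [hμsum] at idμ
  rw [ht0sum] at idt0
  have hle : ¬ SS p lam < n0 := hn0min (SS p lam) ⟨lam, Relation.ReflTransGen.refl, rfl⟩
  by_cases hless : SS p μ < SS p lam
  · refine ⟨μ, hμmem, ?_⟩
    have hmul : (p - 1) * alphaCarry p μ < (p - 1) * alphaCarry p lam := by omega
    exact Nat.lt_of_mul_lt_mul_left hmul
  · have heq : SS p μ = SS p lam := by omega
    have hmul2 : (p - 1) * (alphaCarry p t0 + 1) ≤ (p - 1) * alphaCarry p lam :=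
      Nat.mul_le_mul_left _ (by omega)
    rw [Nat.mul_add, Nat.mul_one] at hmul2
    have hcard_t0 : Multiset.card t0 ≤ SS p t0 := card_le_SS hp2 ht0pos
    have hScμ : Multiset.card μ + (p - 1) ≤ SS p μ := by
      rw [heq, hμcard, ← ht0card]; omega
    have hsdlt : sigmaDigits p μ.sum < SS p μ := by
      rw [hμsum]; omega
    obtain ⟨a, hTa⟩ := exists_digit hp2 μ hsdlt
    obtain ⟨ν, hRTG, hνlt⟩ := mainStep hp2 ((p - 1) * TA p a μ - QA p a μ) μ a
      (le_refl _) hμpos hTa hScμ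
    exfalso
    have hfin : SS p ν < n0 := by omega
    exact hn0min (SS p ν) ⟨ν, hμR.trans hRTG, rfl⟩ hfin

end Aux

/-- If `λ` is not `p`-carry-minimal, then its annihilating set
contains a multiset of strictly smaller carry count. -/
theorem statement13 (p : ℕ) (hp : p.Prime) (lam : Multiset ℕ)
    (hpos : ∀ x ∈ lam, 0 < x) (hmin : ¬ IsCarryMin p lam) :
    ∃ lam' ∈ annSet p lam, alphaCarry p lam' < alphaCarry p lam :=
  statement13' p hp lam hpos hmin
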